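/- Let R be a commutative ring, τ : R → R a ring automorphism, d ≥ 1, and let Γ ∈ Mat_r(R) be a square matrix fixed entrywise by τ^d (that is, τ^d(Γ) = Γ, where τ^i(Γ) denotes entrywise application of τ^i). Set G := τ^{d−1}(Γ) · τ^{d−2}(Γ) ⋯ τ(Γ) · Γ. Then the characteristic polynomial of G is fixed by τ acting on coefficients: applying τ to each coefficient of charpoly(G) = det(X·I_r − G) ∈ R[X] returns charpoly(G). In particular, every coefficient of charpoly(G) lies in the fixed subring R^τ := {c ∈ R : τ(c) = c}, and det(I_r − G) ∈ R^τ. (Final step of the proof of Corollary \ref{C:charpolys} of Huang–Papanikolas, showing the characteristic polynomial of Frobenius lies in 𝒜[X].) -/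
import Mathlib

open Polynomial Matrix

private lemma reverse_inj_of_monic {R : Type*} [CommRing R] {p q : R[X]}
    (_hp : p.Monic) (_hq : q.Monic) (hdeg : p.natDegree = q.natDegree)
    (h : p.reverse = q.reverse) : p = q := by
  ext k
  rcases le_or_gt k p.natDegree with hk | hk
  · have h1 : p.coeff k = p.reverse.coeff (p.natDegree - k) := by
      rw [Polynomial.coeff_reverse, Polynomial.revAt_le (Nat.sub_le _ _),
        Nat.sub_sub_self hk]
    have h2 : q.coeff k = q.reverse.coeff (q.natDegree - k) := by
      rw [Polynomial.coeff_reverse, Polynomial.revAt_le (Nat.sub_le _ _),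
        Nat.sub_sub_self (hdeg ▸ hk)]
    rw [h1, h2, h, hdeg]
  · rw [Polynomial.coeff_eq_zero_of_natDegree_lt hk,
      Polynomial.coeff_eq_zero_of_natDegree_lt (hdeg ▸ hk)]

private lemma charpoly_mul_comm' {R : Type*} [CommRing R] {r : ℕ}
    (A B : Matrix (Fin r) (Fin r) R) : (A * B).charpoly = (B * A).charpoly := by
  nontriviality R
  apply reverse_inj_of_monic (A * B).charpoly_monic (B * A).charpoly_monic
  · rw [Matrix.charpoly_natDegree_eq_dim, Matrix.charpoly_natDegree_eq_dim]
  · rw [Matrix.reverse_charpoly, Matrix.reverse_charpoly]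
    unfold Matrix.charpolyRev
    have h1 : (X : R[X]) • (A * B).map (C : R →+* R[X]) =
        ((X : R[X]) • A.map C) * B.map C := by
      rw [Matrix.map_mul, Matrix.smul_mul]
    have h2 : (B.map (C : R →+* R[X])) * ((X : R[X]) • A.map C) =
        (X : R[X]) • (B * A).map C := by
      rw [Matrix.map_mul, Matrix.mul_smul]
    rw [h1, Matrix.det_one_sub_mul_comm, h2]

/-- Final step of the proof of Huang–Papanikolas, Corollary `C:charpolys`.
Let `R` be a commutative ring, `τ` a ring automorphism of `R`, `d ≥ 1`, and
`Γ ∈ Mat_r(R)` fixed entrywise by `τ^d`.  Setting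
`G = τ^{d−1}(Γ) ⋯ τ(Γ) · Γ`, the characteristic polynomial of `G` is fixed by
`τ` acting on coefficients; in particular every coefficient of
`charpoly(G)` lies in the fixed subring `R^τ`, and `det(1 − G) ∈ R^τ`. -/
theorem charpoly_of_twisted_product_fixed {R : Type*} [CommRing R] (τ : R ≃+* R)
    (d : ℕ) (hd : 1 ≤ d) (r : ℕ) (Γ : Matrix (Fin r) (Fin r) R)
    (hΓ : Γ.map ⇑(τ ^ d) = Γ) :
    letI G : Matrix (Fin r) (Fin r) R :=
      (((List.range d).reverse).map fun i => Γ.map ⇑(τ ^ i)).prod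
    Polynomial.map (τ : R →+* R) G.charpoly = G.charpoly
    ∧ (∀ i : ℕ, τ (G.charpoly.coeff i) = G.charpoly.coeff i)
    ∧ τ ((1 - G).det) = (1 - G).det := by
  obtain ⟨n, rfl⟩ : ∃ n, d = n + 1 := ⟨d - 1, (Nat.succ_pred_eq_of_pos hd).symm⟩
  set f : ℕ → Matrix (Fin r) (Fin r) R := fun i => Γ.map ⇑(τ ^ i) with hf
  set Q : Matrix (Fin r) (Fin r) R :=
    ((((List.range n).map Nat.succ).reverse).map f).prod with hQ
  set G : Matrix (Fin r) (Fin r) R :=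
    (((List.range (n + 1)).reverse).map f).prod with hGdef
  have hG : G = Q * Γ := by
    rw [hGdef, List.range_succ_eq_map, List.reverse_cons, List.map_append, List.prod_append]
    simp only [hQ, hf, List.map_cons, List.map_nil, List.prod_cons, List.prod_nil, mul_one,
      List.map_reverse, List.map_map, pow_zero]
    set_option linter.unusedTactic false in congr 1
  have hGmap : G.map ⇑τ = Γ * Q := by
    have hmap : G.map ⇑τ =
        (((List.range (n + 1)).reverse).map fun i => Γ.map ⇑(τ ^ (i + 1))).prod := by
      rw [hGdef]
      show ((τ : R →+* R).mapMatrix : Matrix (Fin r) (Fin r) R →+* _)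
          ((((List.range (n + 1)).reverse).map f).prod) = _
      rw [map_list_prod, List.map_map]
      congr 1
      apply List.map_congr_left
      intro i _
      show ((f i).map ⇑τ) = Γ.map ⇑(τ ^ (i + 1))
      rw [hf, Matrix.map_map]
      congr 1
      ext x
      rw [pow_succ']
      rfl
    rw [hmap, List.range_succ, List.reverse_append, List.map_append, List.prod_append]
    simp only [List.reverse_singleton, List.map_cons, List.map_nil, List.prod_cons,
      List.prod_nil, mul_one]
    have h1 : Γ.map ⇑(τ ^ (n + 1)) = Γ := hΓ
    have h2 : ((List.range n).reverse.map fun i => Γ.map ⇑(τ ^ (i + 1))).prod = Q := by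
      rw [hQ]
      simp only [List.map_reverse, List.map_map]
      rfl
    rw [h1, h2]
  have hcp : (G.map ⇑τ).charpoly = G.charpoly := by
    rw [hGmap, hG]
    exact charpoly_mul_comm' Γ Q
  have hmain : Polynomial.map (τ : R →+* R) G.charpoly = G.charpoly := by
    rw [← Matrix.charpoly_map]
    exact hcp
  refine ⟨hmain, fun i => ?_, ?_⟩
  · conv_rhs => rw [← hmain]
    rw [Polynomial.coeff_map]
    rfl
  · have h0 : τ ((1 - G).det) =
        (((τ : R →+* R).mapMatrix : Matrix (Fin r) (Fin r) R →+* _) (1 - G)).det :=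
      RingHom.map_det (τ : R →+* R) (1 - G)
    rw [h0]
    have h1 : ((τ : R →+* R).mapMatrix : Matrix (Fin r) (Fin r) R →+* _) (1 - G) =
        1 - G.map ⇑τ := by
      rw [map_sub, _root_.map_one]
      rfl
    rw [h1, hGmap, Matrix.det_one_sub_mul_comm, ← hG]
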